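/- In the setup below: (i) if f is a compactly supported continuous function from G to C_b(G) with supp f ⊆ B(e,s) for some s > 0, then ⟨A_f φ_w, φ_z⟩_{L²(G,μ)} = 0 for all z,w ∈ Z with d(z,w) > s + δ/2; in particular the operator W* A_f W on ℓ²(Z) has propagation at most s + δ/2. (ii) Consequently, for every operator a in the operator-norm closure of {A_f : f ∈ C_c(G, C_b(G))} in B(L²(G,μ)), the operator W* a W belongs to the uniform Roe algebra C*_u(Z). -/

import Mathlib

open MeasureTheory Metric Bornology Filter Topology
open scoped ENNReal BoundedContinuousFunction

noncomputable section

/-- `ℓ²(X)` over `ℂ`. -/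
abbrev l2 (X : Type*) : Type _ := lp (fun _ : X => ℂ) 2

/-- The standard basis vector `δ_x` of `ℓ²(X)`. -/
def delta {X : Type*} (x : X) : l2 X := by classical exact lp.single 2 x 1

/-- The matrix entry `a_{x,y} = ⟨a δ_y, δ_x⟩` of a bounded operator on `ℓ²(X)`. -/
def entry {X : Type*} (a : l2 X →L[ℂ] l2 X) (x y : X) : ℂ := inner ℂ (delta x) (a (delta y))

/-- `d` is a proper left-invariant metric on the topological group `G` that induces
(is compatible with) its topology. -/
structure IsProperLeftInvariantCompatibleMetric (G : Type*) [Group G] [TopologicalSpace G]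
    (d : G → G → ℝ) : Prop where
  refl : ∀ x, d x x = 0
  eq_of : ∀ {x y}, d x y = 0 → x = y
  symm : ∀ x y, d x y = d y x
  triangle : ∀ x y z, d x z ≤ d x y + d y z
  left_invariant : ∀ g x y, d (g * x) (g * y) = d x y
  compatible : ∀ s : Set G, IsOpen s ↔ ∀ x ∈ s, ∃ ε > 0, ∀ y, d x y < ε → y ∈ s
  proper : ∀ (x : G) (r : ℝ), IsCompact {y : G | d x y ≤ r}

/-- The uniform Roe algebra of the subset `Z ⊆ G` with respect to the metric `d`:
the operator-norm closure of the finite propagation operators on `ℓ²(Z)`. -/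
def subsetRoe {G : Type*} (d : G → G → ℝ) (Z : Set G) : Set (l2 Z →L[ℂ] l2 Z) :=
  closure {T | ∃ R : ℝ, ∀ z w : Z, R < d z w → entry T z w = 0}

/-- (i) For `f ∈ C_c(G, C_b(G))` supported in `B(e,s)`, the operator
`W* A_f W` has propagation at most `s + δ/2`; (ii) hence `W* a W ∈ C*_u(Z)` for every
`a` in the closure of the `A_f`. -/
theorem WstarAW_in_uniform_roe
    (G : Type*) [Group G] [TopologicalSpace G] [IsTopologicalGroup G]
    [LocallyCompactSpace G] [SecondCountableTopology G] [T2Space G]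
    [MeasurableSpace G] [BorelSpace G]
    (μ : Measure G) [μ.IsHaarMeasure]
    (Δ : G → ℝ) (hΔpos : ∀ y : G, 0 < Δ y)
    (hΔ : ∀ y : G, Measure.map (fun x => x * y) μ = ENNReal.ofReal (Δ y)⁻¹ • μ)
    (d : G → G → ℝ) (hd : IsProperLeftInvariantCompatibleMetric G d)
    (Z : Set G)
    (hZulf : ∀ S > (0:ℝ), ∃ N : ℕ, ∀ z ∈ Z,
      {x ∈ Z | d z x ≤ S}.Finite ∧ {x ∈ Z | d z x ≤ S}.ncard ≤ N)
    (δ : ℝ) (hδpos : 0 < δ)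
    (hsep : ∀ z ∈ Z, ∀ w ∈ Z, z ≠ w → δ ≤ d z w)
    (hlat : ∃ R > (0:ℝ), ∀ x : G, ∃ z ∈ Z, d z x ≤ R)
    (φ : G → ℝ) (hφcont : Continuous φ) (hφnn : ∀ g : G, 0 ≤ φ g)
    (hφsupp : ∀ g : G, δ / 4 < d 1 g → φ g = 0)
    (hφnorm : ∫ g, φ g ^ 2 ∂μ = 1)
    (W : l2 Z →L[ℂ] Lp ℂ 2 μ) (hWiso : ∀ v : l2 Z, ‖W v‖ = ‖v‖)
    (hW : ∀ z : Z, ∀ᵐ x ∂μ, (W (delta z) : G → ℂ) x = ((φ ((z : G)⁻¹ * x) : ℝ) : ℂ)) :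
    (∀ s > (0:ℝ), ∀ f : G → (G →ᵇ ℂ), Continuous f → HasCompactSupport f →
      (∀ y : G, s < d 1 y → f y = 0) →
      ∀ A : Lp ℂ 2 μ →L[ℂ] Lp ℂ 2 μ,
        (∀ ξ : Lp ℂ 2 μ, ∀ᵐ x ∂μ, (A ξ : G → ℂ) x =
          ∫ y, f y x * (ξ : G → ℂ) (x * y) * (((Δ y ^ ((1:ℝ)/2) : ℝ)) : ℂ) ∂μ) →
        ∀ z w : Z, s + δ / 2 < d z w →
          (inner ℂ (W (delta z)) (A (W (delta w))) : ℂ) = 0 ∧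
          entry (((ContinuousLinearMap.adjoint W).comp A).comp W) z w = 0) ∧
    (∀ a : Lp ℂ 2 μ →L[ℂ] Lp ℂ 2 μ,
      a ∈ closure {A : Lp ℂ 2 μ →L[ℂ] Lp ℂ 2 μ |
        ∃ f : G → (G →ᵇ ℂ), Continuous f ∧ HasCompactSupport f ∧
          ∀ ξ : Lp ℂ 2 μ, ∀ᵐ x ∂μ, (A ξ : G → ℂ) x =
            ∫ y, f y x * (ξ : G → ℂ) (x * y) * (((Δ y ^ ((1:ℝ)/2) : ℝ)) : ℂ) ∂μ} →
      ((ContinuousLinearMap.adjoint W).comp a).comp W ∈ subsetRoe d Z) := by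
  classical
  -- distance facts
  have hdist : ∀ z x : G, d 1 (z⁻¹ * x) = d z x := by
    intro z x
    simpa using hd.left_invariant z⁻¹ z x
  have hopen : ∀ (c : G) (r : ℝ), IsOpen {y : G | d c y < r} := by
    intro c r
    rw [hd.compatible]
    intro x hx
    simp only [Set.mem_setOf_eq] at hx
    refine ⟨r - d c x, by linarith, fun y hy => ?_⟩
    have := hd.triangle c x y
    simp only [Set.mem_setOf_eq]
    linarith
  have H1 : (∀ s > (0:ℝ), ∀ f : G → (G →ᵇ ℂ), Continuous f → HasCompactSupport f →
      (∀ y : G, s < d 1 y → f y = 0) →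
      ∀ A : Lp ℂ 2 μ →L[ℂ] Lp ℂ 2 μ,
        (∀ ξ : Lp ℂ 2 μ, ∀ᵐ x ∂μ, (A ξ : G → ℂ) x =
          ∫ y, f y x * (ξ : G → ℂ) (x * y) * (((Δ y ^ ((1:ℝ)/2) : ℝ)) : ℂ) ∂μ) →
        ∀ z w : Z, s + δ / 2 < d z w →
          (inner ℂ (W (delta z)) (A (W (delta w))) : ℂ) = 0 ∧
          entry (((ContinuousLinearMap.adjoint W).comp A).comp W) z w = 0) := by
    intro s hs f hfc hfK hfzero A hA z w hzw
    have key : (inner ℂ (W (delta z)) (A (W (delta w))) : ℂ) = 0 := by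
      rw [MeasureTheory.L2.inner_def]
      apply integral_eq_zero_of_ae
      filter_upwards [hW z, hA (W (delta w))] with x h1 h2
      simp only [Pi.zero_apply]
      rw [RCLike.inner_apply, h1, h2]
      by_cases hx : d (z : G) x ≤ δ / 4
      · have hae : ∀ᵐ y ∂μ, (W (delta w) : G → ℂ) (x * y)
            = ((φ ((w : G)⁻¹ * (x * y)) : ℝ) : ℂ) :=
          ((measurePreserving_mul_left μ x).quasiMeasurePreserving.tendsto_ae).eventually (hW w)
        have hzero : (∫ y, (f y) x * (W (delta w) : G → ℂ) (x * y)
            * (((Δ y ^ ((1:ℝ)/2) : ℝ)) : ℂ) ∂μ) = 0 := by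
          apply integral_eq_zero_of_ae
          filter_upwards [hae] with y hy
          simp only [Pi.zero_apply]
          by_cases hys : s < d 1 y
          · rw [hfzero y hys]
            simp
          · push_neg at hys
            rw [hy]
            have h1y : d x (x * y) = d 1 y := by simpa using hd.left_invariant x 1 y
            have hw4 : δ / 4 < d (w : G) (x * y) := by
              have t1 := hd.triangle (z : G) x (x * y)
              have t2 := hd.triangle (z : G) (x * y) (w : G)
              have hsym := hd.symm (x * y) (w : G)
              linarith
            rw [hφsupp _ (by rw [hdist]; exact hw4)]
            simp
        rw [hzero, zero_mul]
      · push_neg at hx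
        rw [hφsupp _ (by rw [hdist]; exact hx)]
        simp
    refine ⟨key, ?_⟩
    simp only [entry, ContinuousLinearMap.comp_apply,
      ContinuousLinearMap.adjoint_inner_right]
    exact key
  refine ⟨H1, ?_⟩
  intro a ha
  have hcont : Continuous fun A : Lp ℂ 2 μ →L[ℂ] Lp ℂ 2 μ =>
      ((ContinuousLinearMap.adjoint W).comp A).comp W :=
    (continuous_const.clm_comp continuous_id).clm_comp continuous_const
  unfold subsetRoe
  refine map_mem_closure (f := fun A : Lp ℂ 2 μ →L[ℂ] Lp ℂ 2 μ =>
      ((ContinuousLinearMap.adjoint W).comp A).comp W) hcont ha ?_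
  rintro A ⟨f, hfc, hfK, hfA⟩
  obtain ⟨s, hspos, hszero⟩ : ∃ s > (0:ℝ), ∀ y : G, s < d 1 y → f y = 0 := by
    have hcover : tsupport f ⊆ ⋃ n : ℕ, {y : G | d 1 y < n} := by
      intro y _
      obtain ⟨n, hn⟩ := exists_nat_gt (d 1 y)
      exact Set.mem_iUnion.mpr ⟨n, hn⟩
    obtain ⟨t, ht⟩ := hfK.elim_finite_subcover
      (fun n : ℕ => {y : G | d 1 y < (n : ℝ)}) (fun n => hopen 1 n) hcover
    refine ⟨(t.sup id : ℕ) + 1, by positivity, fun y hy => ?_⟩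
    by_contra hfy
    have hyK : y ∈ tsupport f := subset_tsupport f (Function.mem_support.mpr hfy)
    obtain ⟨i, hi, hyi⟩ := Set.mem_iUnion₂.mp (ht hyK)
    have h1 : d 1 y < (i : ℝ) := hyi
    have h2 : (i : ℝ) ≤ ((t.sup id : ℕ) : ℝ) := by
      exact_mod_cast Finset.le_sup (f := id) hi
    linarith
  exact ⟨s + δ / 2, fun z w hzw => (H1 s hspos f hfc hfK hszero A hfA z w hzw).2⟩
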